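/- arXiv:2006.12785 — 4 statements merged into one kernel-verified Lean document; each statement's English description precedes it below -/
import Mathlib

section
/- Exact Fourier identity for the first filtered integral: for sufficiently regular functions $v, w$ on $\mathbb{T}$, $\int_0^\tau e^{-is\partial_x^2}\big[(e^{is\partial_x^2}v)\, e^{is\partial_x^2}|w|^2\big] ds = \frac{i}{2} e^{-i\tau\partial_x^2}\big[(e^{i\tau\partial_x^2}\partial_x^{-1}v)\, e^{i\tau\partial_x^2}\partial_x^{-1}|w|^2\big] - \frac{i}{2}(\partial_x^{-1}v)\,\partial_x^{-1}|w|^2 + \tau \hat{v}_0 |w|^2 + \tau \widehat{(|w|^2)}_0 (v - \hat{v}_0)$. -/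
/-- Japanese bracket. -/
noncomputable def jap (x : ℝ) : ℝ := Real.sqrt (1 + x ^ 2)

/-- A function on `𝕋` is represented by its Fourier coefficients `c : ℤ → ℂ`.
`pc a b` is the Fourier coefficient sequence of the pointwise product. -/
noncomputable def pc (a b : ℤ → ℂ) : ℤ → ℂ := fun k => ∑' j : ℤ, a j * b (k - j)

/-- Fourier coefficients of the complex conjugate function. -/
noncomputable def cconj (c : ℤ → ℂ) : ℤ → ℂ := fun k => starRingEnd ℂ (c (-k))

/-- Fourier coefficients of `e^{it∂ₓ²} f` (multiplication by `e^{-itk²}`). -/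
noncomputable def eS (t : ℝ) (c : ℤ → ℂ) : ℤ → ℂ :=
  fun k => Complex.exp (-(Complex.I) * t * (k : ℝ) ^ 2) * c k

/-- Fourier coefficients of `∂ₓ⁻¹ f = ∑_{k≠0} (ik)⁻¹ f̂ₖ e^{ikx}`. -/
noncomputable def pinv (c : ℤ → ℂ) : ℤ → ℂ :=
  fun k => if k = 0 then 0 else c k / (Complex.I * k)

/-- Fourier coefficients of `∂ₓ f`. -/
noncomputable def dx (c : ℤ → ℂ) : ℤ → ℂ := fun k => Complex.I * k * c k

/-- Fourier coefficients of `∂ₓ² f`. -/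
noncomputable def dx2 (c : ℤ → ℂ) : ℤ → ℂ := fun k => (Complex.I * k) ^ 2 * c k

/-- "Sufficiently regular": Fourier coefficients decay faster than any polynomial. -/
def Regular (c : ℤ → ℂ) : Prop :=
  ∀ j : ℕ, Summable fun k : ℤ => jap k ^ (j : ℝ) * ‖c k‖

/-- **Exact Fourier identity for the first filtered integral:** for sufficiently
regular `v, w` on `𝕋` (identified with their Fourier coefficients) one has, mode by
mode,
`∫₀^τ e^{-is∂ₓ²}[(e^{is∂ₓ²}v) e^{is∂ₓ²}|w|²] ds
  = (i/2) e^{-iτ∂ₓ²}[(e^{iτ∂ₓ²}∂ₓ⁻¹v)(e^{iτ∂ₓ²}∂ₓ⁻¹|w|²)] - (i/2)(∂ₓ⁻¹v)(∂ₓ⁻¹|w|²)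
    + τ v̂₀ |w|² + τ (|w|²)^₀ (v - v̂₀)`. -/
theorem first_filtered_integral_identity (τ : ℝ) (hτ : 0 < τ)
    (v w : ℤ → ℂ) (hv : Regular v) (hw : Regular w) :
    ∀ k : ℤ,
      (∫ s in (0 : ℝ)..τ,
          Complex.exp (Complex.I * s * (k : ℝ) ^ 2) *
            pc (eS s v) (eS s (pc w (cconj w))) k) =
        Complex.I / 2 * Complex.exp (Complex.I * τ * (k : ℝ) ^ 2) *
            pc (eS τ (pinv v)) (eS τ (pinv (pc w (cconj w)))) k
          - Complex.I / 2 * pc (pinv v) (pinv (pc w (cconj w))) k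
          + (τ : ℂ) * v 0 * pc w (cconj w) k
          + (τ : ℂ) * pc w (cconj w) 0 * (if k = 0 then 0 else v k) := by
  intro k
  have hI : (Complex.I : ℂ) ≠ 0 := Complex.I_ne_zero
  set m : ℤ → ℂ := pc w (cconj w) with hm
  have hexp1 : ∀ (t r : ℝ), ‖Complex.exp (Complex.I * (t:ℂ) * ((r:ℂ))^2)‖ = 1 := by
    intro t r
    rw [Complex.norm_exp]
    simp [Complex.mul_re, ← Complex.ofReal_pow]
  have hexp2 : ∀ (t r : ℝ), ‖Complex.exp (-(Complex.I) * (t:ℂ) * ((r:ℂ))^2)‖ = 1 := by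
    intro t r
    rw [Complex.norm_exp]
    simp [Complex.mul_re, ← Complex.ofReal_pow]
  have hv0 : Summable fun j : ℤ => ‖v j‖ := by
    simpa [jap, Real.rpow_zero] using hv 0
  have hw0 : Summable fun j : ℤ => ‖w j‖ := by
    simpa [jap, Real.rpow_zero] using hw 0
  set C : ℝ := (∑' i : ℤ, ‖w i‖) * (∑' i : ℤ, ‖w i‖) with hC
  have hwle : ∀ n : ℤ, ‖w n‖ ≤ ∑' i : ℤ, ‖w i‖ := fun n =>
    Summable.le_tsum hw0 n fun _ _ => norm_nonneg _
  have hprod : ∀ n : ℤ, Summable fun i : ℤ => ‖w i‖ * ‖w (i - n)‖ := by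
    intro n
    exact Summable.of_nonneg_of_le (fun i => by positivity)
      (fun i => mul_le_mul_of_nonneg_left (hwle (i - n)) (norm_nonneg _))
      (hw0.mul_right _)
  have hmb : ∀ n : ℤ, ‖m n‖ ≤ C := by
    intro n
    have h1 : ∀ i : ℤ, ‖w i * cconj w (n - i)‖ = ‖w i‖ * ‖w (i - n)‖ := by
      intro i
      simp [cconj, norm_mul, neg_sub]
    calc ‖m n‖ ≤ ∑' i : ℤ, ‖w i * cconj w (n - i)‖ := by
          refine norm_tsum_le_tsum_norm ?_
          simpa only [h1] using hprod n
      _ = ∑' i : ℤ, ‖w i‖ * ‖w (i - n)‖ := by simp only [h1]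
      _ ≤ ∑' i : ℤ, ‖w i‖ * (∑' i : ℤ, ‖w i‖) := by
          refine Summable.tsum_le_tsum (fun i => mul_le_mul_of_nonneg_left (hwle _) (norm_nonneg _))
            (hprod n) (hw0.mul_right _)
      _ = C := by rw [tsum_mul_right]
  have hCnn : 0 ≤ C := by
    have : 0 ≤ ∑' i : ℤ, ‖w i‖ := tsum_nonneg fun _ => norm_nonneg _
    positivity
  have hpinv : ∀ (c : ℤ → ℂ) (n : ℤ), ‖pinv c n‖ ≤ ‖c n‖ := by
    intro c n
    by_cases h : n = 0
    · simp [pinv, h]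
    · simp only [pinv, if_neg h, norm_div]
      apply div_le_self (norm_nonneg _)
      rw [norm_mul]
      simp only [Complex.norm_I, one_mul, Complex.norm_intCast]
      exact_mod_cast Int.one_le_abs h
  have heS : ∀ (t : ℝ) (c : ℤ → ℂ) (n : ℤ), ‖eS t c n‖ = ‖c n‖ := by
    intro t c n
    rw [eS, norm_mul, hexp2 t (n : ℝ), one_mul]
  -- exponent combination
  have hcomb : ∀ (j : ℤ) (s : ℝ),
      Complex.exp (Complex.I * (s:ℂ) * (((k:ℝ)):ℂ)^2) *
        (Complex.exp (-(Complex.I) * (s:ℂ) * (((j:ℝ)):ℂ)^2) *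
          Complex.exp (-(Complex.I) * (s:ℂ) * ((((k - j : ℤ):ℝ)):ℂ)^2))
      = Complex.exp (Complex.I * (2 * (j:ℂ) * ((k:ℂ) - (j:ℂ))) * (s:ℂ)) := by
    intro j s
    rw [← Complex.exp_add, ← Complex.exp_add]
    congr 1
    push_cast
    ring
  -- per-mode integral
  have key : ∀ j : ℤ,
      (∫ s in (0:ℝ)..τ,
          Complex.exp (Complex.I * s * (k : ℝ) ^ 2) * (eS s v j * eS s m (k - j)))
        = Complex.I / 2 * Complex.exp (Complex.I * τ * (k : ℝ) ^ 2) *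
            (eS τ (pinv v) j * eS τ (pinv m) (k - j))
          - Complex.I / 2 * (pinv v j * pinv m (k - j))
          + (if j = 0 then (τ:ℂ) * (v 0 * m k) else 0)
          + (if j = k ∧ j ≠ 0 then (τ:ℂ) * (v k * m 0) else 0) := by
    intro j
    have hpt : ∀ s : ℝ,
        Complex.exp (Complex.I * s * (k : ℝ) ^ 2) * (eS s v j * eS s m (k - j))
        = Complex.exp (Complex.I * (2 * (j:ℂ) * ((k:ℂ) - (j:ℂ))) * (s:ℂ)) *
            (v j * m (k - j)) := by
      intro s
      simp only [eS]
      rw [← hcomb j s]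
      ring
    simp only [hpt]
    rw [intervalIntegral.integral_mul_const]
    by_cases hj0 : j = 0
    · subst hj0
      simp only [Int.cast_zero, mul_zero, zero_mul, Complex.exp_zero, sub_zero]
      rw [intervalIntegral.integral_const]
      simp only [pinv, eS, if_pos rfl, mul_zero, zero_mul, sub_zero, smul_eq_mul,
        Complex.real_smul]
      simp
    · by_cases hjk : j = k
      · subst hjk
        rw [show (2:ℂ) * (j:ℂ) * ((j:ℂ) - (j:ℂ)) = 0 by ring]
        simp only [mul_zero, zero_mul, Complex.exp_zero, sub_self]
        rw [intervalIntegral.integral_const]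
        simp only [pinv, eS, if_pos rfl, if_neg hj0, mul_zero, zero_mul, sub_zero,
          smul_eq_mul, Complex.real_smul]
        simp [hj0]
      · have hjc : (j:ℂ) ≠ 0 := Int.cast_ne_zero.mpr hj0
        have hkj : (k:ℂ) - (j:ℂ) ≠ 0 := by
          rw [sub_ne_zero]
          exact fun h => hjk (by exact_mod_cast h.symm)
        have hc : Complex.I * (2 * (j:ℂ) * ((k:ℂ) - (j:ℂ))) ≠ 0 :=
          mul_ne_zero hI (mul_ne_zero (mul_ne_zero two_ne_zero hjc) hkj)
        rw [integral_exp_mul_complex hc]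
        rw [Complex.ofReal_zero, mul_zero, Complex.exp_zero]
        have hkj' : (k - j : ℤ) ≠ 0 := sub_ne_zero.mpr (Ne.symm hjk)
        simp only [eS, pinv, if_neg hj0, if_neg hkj',
          if_neg (fun h => hjk h.1 : ¬(j = k ∧ j ≠ 0))]
        rw [add_zero, add_zero]
        have hE := hcomb j τ
        rw [← hE]
        push_cast
        field_simp
  -- interchange of sum and integral
  have hFnorm : ∀ (j : ℤ) (s : ℝ),
      ‖Complex.exp (Complex.I * s * (k : ℝ) ^ 2) * (eS s v j * eS s m (k - j))‖
        = ‖v j‖ * ‖m (k - j)‖ := by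
    intro j s
    rw [norm_mul, norm_mul, hexp1 s (k : ℝ), heS, heS, one_mul]
  have hFsum : Summable fun j : ℤ => ‖v j‖ * ‖m (k - j)‖ :=
    Summable.of_nonneg_of_le (fun j => by positivity)
      (fun j => mul_le_mul_of_nonneg_left (hmb (k - j)) (norm_nonneg _))
      (hv0.mul_right C)
  have hcont : ∀ j : ℤ, Continuous fun s : ℝ =>
      Complex.exp (Complex.I * s * (k : ℝ) ^ 2) * (eS s v j * eS s m (k - j)) := by
    intro j
    simp only [eS]
    fun_prop
  have hswap : (∫ s in (0:ℝ)..τ,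
        Complex.exp (Complex.I * s * (k : ℝ) ^ 2) * pc (eS s v) (eS s m) k)
      = ∑' j : ℤ, ∫ s in (0:ℝ)..τ,
          Complex.exp (Complex.I * s * (k : ℝ) ^ 2) * (eS s v j * eS s m (k - j)) := by
    have hpt2 : ∀ s : ℝ,
        Complex.exp (Complex.I * s * (k : ℝ) ^ 2) * pc (eS s v) (eS s m) k
        = ∑' j : ℤ, Complex.exp (Complex.I * s * (k : ℝ) ^ 2) * (eS s v j * eS s m (k - j)) := by
      intro s
      simp only [pc]
      exact tsum_mul_left.symm
    have hint : ∀ j : ℤ, MeasureTheory.IntegrableOn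
        (fun s : ℝ => Complex.exp (Complex.I * s * (k : ℝ) ^ 2) * (eS s v j * eS s m (k - j)))
        (Set.Ioc 0 τ) := fun j => (hcont j).integrableOn_Ioc
    have hintval : ∀ j : ℤ,
        (∫ s in Set.Ioc (0:ℝ) τ,
          ‖Complex.exp (Complex.I * s * (k : ℝ) ^ 2) * (eS s v j * eS s m (k - j))‖)
        = τ * (‖v j‖ * ‖m (k - j)‖) := by
      intro j
      simp only [hFnorm]
      rw [MeasureTheory.setIntegral_const]
      simp [Real.volume_Ioc, ENNReal.toReal_ofReal hτ.le, hτ.le]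
    have hsummable : Summable fun j : ℤ => ∫ s in Set.Ioc (0:ℝ) τ,
        ‖Complex.exp (Complex.I * s * (k : ℝ) ^ 2) * (eS s v j * eS s m (k - j))‖ := by
      simp only [hintval]
      exact hFsum.mul_left τ
    have hmain := MeasureTheory.integral_tsum_of_summable_integral_norm hint hsummable
    rw [intervalIntegral.integral_of_le hτ.le]
    simp only [hpt2]
    rw [← hmain]
    exact tsum_congr fun j => (intervalIntegral.integral_of_le hτ.le).symm
  rw [hswap]
  rw [tsum_congr key]
  -- split the sum
  have hA : Summable fun j : ℤ =>
      Complex.I / 2 * Complex.exp (Complex.I * τ * (k : ℝ) ^ 2) *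
        (eS τ (pinv v) j * eS τ (pinv m) (k - j)) := by
    apply Summable.of_norm
    refine Summable.of_nonneg_of_le (fun j => norm_nonneg _) (fun j => ?_)
      (((hv0.mul_right C).mul_left
        ‖Complex.I / 2 * Complex.exp (Complex.I * τ * (k : ℝ) ^ 2)‖))
    rw [norm_mul]
    refine mul_le_mul_of_nonneg_left ?_ (norm_nonneg _)
    rw [norm_mul, heS, heS]
    exact mul_le_mul (hpinv v j) (le_trans (hpinv m _) (hmb _)) (norm_nonneg _) (norm_nonneg _)
  have hB : Summable fun j : ℤ =>
      Complex.I / 2 * (pinv v j * pinv m (k - j)) := by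
    apply Summable.of_norm
    refine Summable.of_nonneg_of_le (fun j => norm_nonneg _) (fun j => ?_)
      (((hv0.mul_right C).mul_left ‖Complex.I / (2:ℂ)‖))
    rw [norm_mul]
    refine mul_le_mul_of_nonneg_left ?_ (norm_nonneg _)
    rw [norm_mul]
    exact mul_le_mul (hpinv v j) (le_trans (hpinv m _) (hmb _)) (norm_nonneg _) (norm_nonneg _)
  have hH1 : Summable fun j : ℤ => (if j = 0 then (τ:ℂ) * (v 0 * m k) else 0) :=
    (hasSum_ite_eq (0 : ℤ) _).summable
  have hh2eq : ∀ j : ℤ, (if j = k ∧ j ≠ 0 then (τ:ℂ) * (v k * m 0) else 0)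
      = (if j = k then (if k = 0 then 0 else (τ:ℂ) * (v k * m 0)) else 0) := by
    intro j
    by_cases h1 : j = k
    · subst h1
      by_cases h2 : j = 0 <;> simp [h2]
    · simp [h1]
  have hH2 : Summable fun j : ℤ => (if j = k ∧ j ≠ 0 then (τ:ℂ) * (v k * m 0) else 0) := by
    simp only [hh2eq]
    exact (hasSum_ite_eq (k : ℤ) _).summable
  rw [Summable.tsum_add (((hA.sub hB)).add hH1) hH2, Summable.tsum_add (hA.sub hB) hH1, Summable.tsum_sub hA hB,
    tsum_mul_left, tsum_mul_left, tsum_ite_eq]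
  simp only [hh2eq]
  rw [tsum_ite_eq]
  simp only [pc]
  by_cases hk : k = 0 <;> simp only [hk, if_pos, if_neg, ite_true, ite_false] <;> ring
end

section
/- Exact Fourier identity for the second filtered integral: for sufficiently regular functions $v, w$ on $\mathbb{T}$, $\int_0^\tau e^{-is\partial_x^2}\big[(e^{-is\partial_x^2}\overline{v})\, e^{is\partial_x^2} w^2\big] ds = \frac{i}{2}e^{-i\tau\partial_x^2}\partial_x^{-1}\big[(e^{-i\tau\partial_x^2}\partial_x^{-1}\overline{v})\,(e^{i\tau\partial_x^2}w^2)\big] - \frac{i}{2}\partial_x^{-1}(w^2\,\partial_x^{-1}\overline{v}) + \tau\widehat{(\overline{v}w^2)}_0 + \tau \overline{\hat{v}_0}(w^2 - \widehat{(w^2)}_0)$. -/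
lemma regular_summable_norm {c : ℤ → ℂ} (hc : Regular c) :
    Summable fun k => ‖c k‖ := by
  have h := hc 0
  simpa using h

lemma le_tsum_norm {c : ℤ → ℂ} (hc : Summable fun k => ‖c k‖) (m : ℤ) :
    ‖c m‖ ≤ ∑' k, ‖c k‖ := hc.le_tsum m (fun _ _ => norm_nonneg _)

lemma pc_norm_le {a b : ℤ → ℂ} (ha : Summable fun k => ‖a k‖)
    (hb : Summable fun k => ‖b k‖) (m : ℤ) :
    ‖pc a b m‖ ≤ (∑' k, ‖a k‖) * (∑' k, ‖b k‖) := by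
  have hle : ∀ j : ℤ, ‖a j * b (m - j)‖ ≤ ‖a j‖ * (∑' k, ‖b k‖) := by
    intro j
    rw [norm_mul]
    exact mul_le_mul_of_nonneg_left (le_tsum_norm hb _) (norm_nonneg _)
  have hsum : Summable fun j => ‖a j * b (m - j)‖ :=
    Summable.of_nonneg_of_le (fun j => norm_nonneg _) hle (ha.mul_right _)
  calc ‖pc a b m‖ ≤ ∑' j, ‖a j * b (m - j)‖ := norm_tsum_le_tsum_norm hsum
    _ ≤ ∑' j, ‖a j‖ * (∑' k, ‖b k‖) := hsum.tsum_le_tsum hle (ha.mul_right _)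
    _ = (∑' k, ‖a k‖) * (∑' k, ‖b k‖) := tsum_mul_right

lemma norm_eS (t : ℝ) (c : ℤ → ℂ) (m : ℤ) : ‖eS t c m‖ = ‖c m‖ := by
  rw [eS, norm_mul,
    show -(Complex.I) * (t:ℂ) * ((m:ℝ):ℂ)^2 = ((-(t * (m:ℝ)^2) : ℝ):ℂ) * Complex.I by
      push_cast; ring,
    Complex.norm_exp_ofReal_mul_I, one_mul]

lemma norm_pinv_le (c : ℤ → ℂ) (m : ℤ) : ‖pinv c m‖ ≤ ‖c m‖ := by
  by_cases hm : m = 0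
  · simp [pinv, hm]
  · rw [pinv, if_neg hm, norm_div]
    apply div_le_self (norm_nonneg _)
    rw [norm_mul, Complex.norm_I, one_mul]
    have h1 : (1:ℤ) ≤ |m| := Int.one_le_abs (by omega)
    calc (1:ℝ) ≤ |(m:ℝ)| := by exact_mod_cast h1
      _ = ‖(m:ℂ)‖ := by simp

/-- **Exact Fourier identity for the second filtered integral:** for sufficiently
regular `v, w` on `𝕋` one has, mode by mode,
`∫₀^τ e^{-is∂ₓ²}[(e^{-is∂ₓ²} v̄)(e^{is∂ₓ²} w²)] ds
  = (i/2) e^{-iτ∂ₓ²}∂ₓ⁻¹[(e^{-iτ∂ₓ²}∂ₓ⁻¹v̄)(e^{iτ∂ₓ²}w²)] - (i/2)∂ₓ⁻¹(w² ∂ₓ⁻¹v̄)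
    + τ (v̄w²)^₀ + τ v̂₀bar (w² - (w²)^₀)`. -/
theorem second_filtered_integral_identity (τ : ℝ) (hτ : 0 < τ)
    (v w : ℤ → ℂ) (hv : Regular v) (hw : Regular w) :
    ∀ k : ℤ,
      (∫ s in (0 : ℝ)..τ,
          Complex.exp (Complex.I * s * (k : ℝ) ^ 2) *
            pc (eS (-s) (cconj v)) (eS s (pc w w)) k) =
        Complex.I / 2 * Complex.exp (Complex.I * τ * (k : ℝ) ^ 2) *
            pinv (pc (eS (-τ) (pinv (cconj v))) (eS τ (pc w w))) k
          - Complex.I / 2 * pinv (pc (pc w w) (pinv (cconj v))) k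
          + (τ : ℂ) * (if k = 0 then pc (cconj v) (pc w w) 0 else 0)
          + (τ : ℂ) * starRingEnd ℂ (v 0) *
              (if k = 0 then 0 else pc w w k) := by
  intro k
  set cv : ℤ → ℂ := cconj v with hcv
  set W : ℤ → ℂ := pc w w with hW
  have hSw : Summable fun j => ‖w j‖ := regular_summable_norm hw
  have hSv : Summable fun j => ‖v j‖ := regular_summable_norm hv
  have hScv : Summable fun j => ‖cv j‖ := by
    have h := ((Equiv.neg ℤ).summable_iff (f := fun j => ‖v j‖)).2 hSv
    simpa [hcv, cconj, Function.comp_def] using h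
  set Cw : ℝ := (∑' j, ‖w j‖) * (∑' j, ‖w j‖) with hCw
  have hWbd : ∀ m, ‖W m‖ ≤ Cw := fun m => pc_norm_le hSw hSw m
  set F : ℤ → ℝ → ℂ := fun j s =>
    Complex.exp (Complex.I * s * (k : ℝ) ^ 2) * (eS (-s) cv j * eS s W (k - j)) with hF
  have hFval : ∀ j (s : ℝ), F j s
      = cv j * W (k - j) * Complex.exp (2 * Complex.I * k * j * s) := by
    intro j s
    have h1 : F j s = Complex.exp (Complex.I * s * (k:ℝ)^2) *
        Complex.exp (-(Complex.I) * ((-s : ℝ):ℂ) * ((j:ℝ):ℂ)^2) *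
        Complex.exp (-(Complex.I) * ((s:ℝ):ℂ) * ((((k - j : ℤ)):ℝ):ℂ)^2) *
        (cv j * W (k - j)) := by
      simp only [hF, eS]; ring
    rw [h1, ← Complex.exp_add, ← Complex.exp_add,
      show Complex.I * (s:ℂ) * ((k:ℝ):ℂ)^2 + -(Complex.I) * ((-s : ℝ):ℂ) * ((j:ℝ):ℂ)^2 +
        -(Complex.I) * ((s:ℝ):ℂ) * ((((k - j : ℤ)):ℝ):ℂ)^2
        = 2 * Complex.I * (k:ℂ) * (j:ℂ) * (s:ℂ) by push_cast; ring]
    ring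
  have hFnorm : ∀ j (s : ℝ), ‖F j s‖ = ‖cv j‖ * ‖W (k - j)‖ := by
    intro j s
    rw [hFval j s,
      show (2:ℂ) * Complex.I * (k:ℂ) * (j:ℂ) * (s:ℂ)
        = ((2 * (k:ℝ) * (j:ℝ) * s : ℝ):ℂ) * Complex.I by push_cast; ring,
      norm_mul, norm_mul, Complex.norm_exp_ofReal_mul_I, mul_one]
  set c2 : ℤ → ℂ := fun j => if k * j = 0 then (τ : ℂ)
      else (Complex.exp (2 * Complex.I * k * j * τ) - 1) / (2 * Complex.I * k * j) with hc2
  have hInt : ∀ j, (∫ s in (0:ℝ)..τ, F j s) = cv j * W (k - j) * c2 j := by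
    intro j
    simp only [hFval]
    rw [intervalIntegral.integral_const_mul]
    congr 1
    by_cases hkj : k * j = 0
    · have hc : (2 * Complex.I * (k:ℂ) * (j:ℂ)) = 0 := by
        have h0 : ((k * j : ℤ) : ℂ) = 0 := by rw [hkj]; simp
        push_cast at h0
        rw [show (2:ℂ) * Complex.I * k * j = 2 * Complex.I * ((k:ℂ) * j) by ring, h0, mul_zero]
      simp only [hc2, if_pos hkj, hc, zero_mul, Complex.exp_zero,
        intervalIntegral.integral_const, smul_eq_mul, mul_one, Complex.ofReal_sub,
        Complex.ofReal_zero, sub_zero]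
      simp [Complex.real_smul]
    · obtain ⟨hk0, hj0⟩ := mul_ne_zero_iff.1 hkj
      have hc : (2 * Complex.I * (k:ℂ) * (j:ℂ)) ≠ 0 :=
        mul_ne_zero (mul_ne_zero (mul_ne_zero two_ne_zero Complex.I_ne_zero)
          (Int.cast_ne_zero.2 hk0)) (Int.cast_ne_zero.2 hj0)
      rw [integral_exp_mul_complex hc]
      simp only [hc2, if_neg hkj, Complex.ofReal_zero, mul_zero, Complex.exp_zero]
  have hSumF : ∀ s : ℝ, Summable fun j => F j s := by
    intro s
    apply Summable.of_norm
    have : (fun j => ‖F j s‖) = fun j => ‖cv j‖ * ‖W (k - j)‖ :=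
      funext fun j => hFnorm j s
    rw [this]
    exact Summable.of_nonneg_of_le (fun j => mul_nonneg (norm_nonneg _) (norm_nonneg _))
      (fun j => mul_le_mul_of_nonneg_left (hWbd _) (norm_nonneg _)) (hScv.mul_right Cw)
  have key : HasSum (fun j => ∫ s in (0:ℝ)..τ, F j s)
      (∫ s in (0:ℝ)..τ, Complex.exp (Complex.I * s * (k : ℝ) ^ 2) *
        pc (eS (-s) cv) (eS s W) k) := by
    apply intervalIntegral.hasSum_integral_of_dominated_convergence
      (bound := fun j (_ : ℝ) => ‖cv j‖ * Cw)
    · intro j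
      apply Continuous.aestronglyMeasurable
      have h : F j = fun s : ℝ => cv j * W (k - j) * Complex.exp (2 * Complex.I * k * j * s) :=
        funext fun s => hFval j s
      rw [h]
      fun_prop
    · intro j
      filter_upwards with s
      intro _
      rw [hFnorm]
      exact mul_le_mul_of_nonneg_left (hWbd _) (norm_nonneg _)
    · filter_upwards with s
      intro _
      exact hScv.mul_right Cw
    · exact intervalIntegrable_const
    · filter_upwards with s
      intro _
      have h1 : Complex.exp (Complex.I * (s:ℂ) * ((k:ℝ):ℂ) ^ 2) * pc (eS (-s) cv) (eS s W) k
          = ∑' j, F j s := by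
        simp only [hF, pc]
        exact (tsum_mul_left).symm
      rw [h1]
      exact (hSumF s).hasSum
  rw [← key.tsum_eq, tsum_congr hInt]
  by_cases hk : k = 0
  · subst hk
    have h0 : ∀ j : ℤ, cv j * W (0 - j) * c2 j = cv j * W (0 - j) * (τ:ℂ) := by
      intro j; simp [hc2]
    rw [tsum_congr h0, tsum_mul_right]
    simp only [pinv, if_pos rfl, if_pos (rfl : (0:ℤ) = 0)]
    simp [pc, mul_comm]
  · have hkC : (k:ℂ) ≠ 0 := Int.cast_ne_zero.2 hk
    set g1 : ℤ → ℂ := fun j => eS (-τ) (pinv cv) j * eS τ W (k - j) with hg1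
    set g2 : ℤ → ℂ := fun j => W (k - j) * pinv cv j with hg2
    set E : ℂ := Complex.exp (Complex.I * τ * ((k:ℝ):ℂ) ^ 2) with hE
    have hpinv1 : pinv (pc (eS (-τ) (pinv cv)) (eS τ W)) k
        = (∑' j, g1 j) / (Complex.I * k) := by
      rw [pinv, if_neg hk]; rfl
    have hreindex : pc W (pinv cv) k = ∑' j, g2 j := by
      rw [show pc W (pinv cv) k = ∑' j, (fun m => W m * pinv cv (k - m)) j from rfl,
        ← (Equiv.subLeft k).tsum_eq (fun m => W m * pinv cv (k - m))]
      apply tsum_congr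
      intro j
      simp [hg2, Equiv.subLeft, sub_sub_cancel]
    have hpinv2 : pinv (pc W (pinv cv)) k = (∑' j, g2 j) / (Complex.I * k) := by
      rw [pinv, if_neg hk, hreindex]
    have hsg1 : Summable g1 := by
      apply Summable.of_norm
      apply Summable.of_nonneg_of_le (fun j => norm_nonneg _) _ (hScv.mul_right Cw)
      intro j
      rw [hg1, norm_mul, norm_eS, norm_eS]
      exact mul_le_mul (norm_pinv_le cv j) (hWbd _) (norm_nonneg _) (norm_nonneg _)
    have hsg2 : Summable g2 := by
      apply Summable.of_norm
      apply Summable.of_nonneg_of_le (fun j => norm_nonneg _) _ (hScv.mul_left Cw)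
      intro j
      rw [hg2, norm_mul]
      exact mul_le_mul (hWbd _) (norm_pinv_le cv j) (norm_nonneg _)
        ((norm_nonneg (W 0)).trans (hWbd 0))
    rw [hpinv1, hpinv2, if_neg hk, if_neg hk]
    have e1 : Complex.I / 2 * E * ((∑' j, g1 j) / (Complex.I * k))
        = ∑' j, Complex.I / 2 * E / (Complex.I * k) * g1 j := by
      rw [tsum_mul_left]; ring
    have e2 : Complex.I / 2 * ((∑' j, g2 j) / (Complex.I * k))
        = ∑' j, Complex.I / 2 / (Complex.I * k) * g2 j := by
      rw [tsum_mul_left]; ring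
    have e3 : (τ:ℂ) * starRingEnd ℂ (v 0) * W k
        = ∑' j : ℤ, (if j = (0:ℤ) then (τ:ℂ) * starRingEnd ℂ (v 0) * W k else 0) :=
      (tsum_ite_eq (0:ℤ) (fun _ => (τ:ℂ) * starRingEnd ℂ (v 0) * W k)).symm
    rw [e1, e2, e3, show ((τ:ℂ)) * 0 = 0 from mul_zero _, add_zero,
      ← Summable.tsum_sub (hsg1.mul_left _) (hsg2.mul_left _),
      ← Summable.tsum_add ((hsg1.mul_left _).sub (hsg2.mul_left _))
        ((hasSum_ite_eq (0:ℤ) ((τ:ℂ) * starRingEnd ℂ (v 0) * W k)).summable)]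
    apply tsum_congr
    intro j
    by_cases hj : j = 0
    · subst hj
      simp only [hc2, mul_zero, if_pos rfl, hg1, hg2, pinv, eS, if_pos rfl,
        mul_zero, zero_mul, sub_zero, hcv, cconj, neg_zero]
      simp
      ring
    · have hjC : (j:ℂ) ≠ 0 := Int.cast_ne_zero.2 hj
      have hkj : k * j ≠ 0 := mul_ne_zero hk hj
      have halg : ∀ (A B X cj Wj : ℂ), E * (A * B) = X →
          cj * Wj * ((X - 1) / (2 * Complex.I * k * j))
          = Complex.I / 2 * E / (Complex.I * k) * (A * (cj / (Complex.I * j)) * (B * Wj))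
            - Complex.I / 2 / (Complex.I * k) * (Wj * (cj / (Complex.I * j))) + 0 := by
        intro A B X cj Wj h
        rw [← h, add_zero]
        field_simp
      have hexp : E * (Complex.exp (-(Complex.I) * ((-τ : ℝ):ℂ) * ((j:ℝ):ℂ)^2) *
          Complex.exp (-(Complex.I) * ((τ:ℝ):ℂ) * ((((k - j : ℤ)):ℝ):ℂ)^2))
          = Complex.exp (2 * Complex.I * k * j * τ) := by
        rw [hE, ← Complex.exp_add, ← Complex.exp_add]
        congr 1
        push_cast; ring
      have := halg _ _ _ (cv j) (W (k - j)) hexp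
      simp only [hc2, if_neg hkj, hg1, hg2, eS, pinv, if_neg hj, if_neg hj]
      convert this using 2
end

section
/- Commutator identity for squares under the Schrödinger flow: for a sufficiently regular function $w$ on $\mathbb{T}$ and $s \in \mathbb{R}$, $(e^{is\partial_x^2} w)^2 - e^{is\partial_x^2}(w^2) = -2i\int_0^s e^{i(s-s_1)\partial_x^2}\big(e^{is_1\partial_x^2}\partial_x w\big)^2\, ds_1$. -/
lemma normExpOne {z : ℂ} (h : z.re = 0) : ‖Complex.exp z‖ = 1 := by
  rw [Complex.norm_exp, h, Real.exp_zero]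

lemma normExp1 (t x : ℝ) : ‖Complex.exp (-(Complex.I) * (t:ℂ) * ((x:ℂ))^2)‖ = 1 :=
  normExpOne (by simp [← Complex.ofReal_pow])

lemma normExp2 (m : ℂ) (hm : m.im = 0) (t : ℝ) :
    ‖Complex.exp (2 * Complex.I * m * (t:ℂ))‖ = 1 :=
  normExpOne (by simp [Complex.mul_re, Complex.mul_im, hm])

lemma key_aux (a b c : ℂ) (p q x y : ℂ) :
    Complex.exp a * ((p * (Complex.exp b * x)) * (q * (Complex.exp c * y)))
      = p * x * (q * y) * Complex.exp (a + b + c) := by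
  rw [Complex.exp_add, Complex.exp_add]; ring

lemma term_eq (s s1 : ℝ) (j k : ℤ) (x y : ℂ) :
    Complex.exp (-(Complex.I) * ((s:ℂ) - (s1:ℂ)) * ((k:ℝ):ℂ)^2) *
      ((Complex.I * (j:ℂ) * (Complex.exp (-(Complex.I) * (s1:ℂ) * ((j:ℝ):ℂ)^2) * x)) *
       (Complex.I * ((k - j : ℤ):ℂ) * (Complex.exp (-(Complex.I) * (s1:ℂ) * (((k - j : ℤ):ℝ):ℂ)^2) * y)))
      = (Complex.I * (j:ℂ) * x * (Complex.I * ((k - j : ℤ):ℂ) * y) *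
          Complex.exp (-(Complex.I) * (s:ℂ) * ((k:ℝ):ℂ)^2)) *
        Complex.exp (2 * Complex.I * ((j * (k - j) : ℤ):ℂ) * (s1:ℂ)) := by
  rw [key_aux, show -(Complex.I) * ((s:ℂ) - (s1:ℂ)) * ((k:ℝ):ℂ)^2 +
      -(Complex.I) * (s1:ℂ) * ((j:ℝ):ℂ)^2 + -(Complex.I) * (s1:ℂ) * (((k - j : ℤ):ℝ):ℂ)^2
      = -(Complex.I) * (s:ℂ) * ((k:ℝ):ℂ)^2 + 2 * Complex.I * ((j * (k - j) : ℤ):ℂ) * (s1:ℂ)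
      from by push_cast; ring, Complex.exp_add]
  ring

/-- **Commutator identity for squares under the Schrödinger flow:** for sufficiently
regular `w` on `𝕋` and `s ∈ ℝ`, mode by mode,
`(e^{is∂ₓ²}w)² - e^{is∂ₓ²}(w²) = -2i ∫₀^s e^{i(s-s₁)∂ₓ²}(e^{is₁∂ₓ²}∂ₓw)² ds₁`. -/
theorem square_commutator_identity (w : ℤ → ℂ) (hw : Regular w) (s : ℝ) :
    ∀ k : ℤ,
      pc (eS s w) (eS s w) k -
          Complex.exp (-(Complex.I) * s * (k : ℝ) ^ 2) * pc w w k =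
        (-2 * Complex.I) *
          ∫ s1 in (0 : ℝ)..s,
            Complex.exp (-(Complex.I) * (s - s1) * (k : ℝ) ^ 2) *
              pc (dx (eS s1 w)) (dx (eS s1 w)) k := by
  intro k
  -- summability basics
  have hjapabs : ∀ x : ℝ, |x| ≤ jap x := fun x => by
    rw [jap, ← Real.sqrt_sq_eq_abs]
    exact Real.sqrt_le_sqrt (by nlinarith)
  have hS0 : Summable (fun j : ℤ => ‖w j‖) := by
    have h := hw 0; simpa using h
  have hS1 : Summable (fun j : ℤ => |((j:ℤ):ℝ)| * ‖w j‖) := by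
    have h := hw 1
    refine Summable.of_nonneg_of_le (fun j => by positivity) (fun j => ?_) (by simpa using h)
    exact mul_le_mul_of_nonneg_right (hjapabs _) (norm_nonneg _)
  set C0 : ℝ := ∑' j : ℤ, ‖w j‖ with hC0
  set C1 : ℝ := ∑' j : ℤ, |((j:ℤ):ℝ)| * ‖w j‖ with hC1
  have hb0 : ∀ m : ℤ, ‖w m‖ ≤ C0 := fun m => Summable.le_tsum hS0 m (fun _ _ => norm_nonneg _)
  have hb1 : ∀ m : ℤ, |((m:ℤ):ℝ)| * ‖w m‖ ≤ C1 :=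
    fun m => Summable.le_tsum hS1 m (fun _ _ => by positivity)
  have hSq0 : Summable (fun j : ℤ => ‖w j‖ * ‖w (k - j)‖) := by
    refine Summable.of_nonneg_of_le (fun j => by positivity) (fun j => ?_) (hS0.mul_right C0)
    exact mul_le_mul_of_nonneg_left (hb0 _) (norm_nonneg _)
  have hSq1 : Summable (fun j : ℤ =>
      (|((j:ℤ):ℝ)| * ‖w j‖) * (|(((k - j : ℤ)):ℝ)| * ‖w (k - j)‖)) := by
    refine Summable.of_nonneg_of_le (fun j => by positivity) (fun j => ?_) (hS1.mul_right C1)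
    exact mul_le_mul_of_nonneg_left (hb1 _) (by positivity)
  -- the coefficient
  set c : ℤ → ℂ := fun j => Complex.I * (j:ℂ) * w j * (Complex.I * ((k - j : ℤ):ℂ) * w (k - j)) *
      Complex.exp (-(Complex.I) * (s:ℂ) * ((k:ℝ):ℂ)^2) with hc
  have hnormc : ∀ j : ℤ, ‖c j‖ = (|((j:ℤ):ℝ)| * ‖w j‖) * (|(((k - j : ℤ)):ℝ)| * ‖w (k - j)‖) := by
    intro j
    simp only [hc, norm_mul, Complex.norm_I, Complex.norm_intCast, normExp1 s (k:ℝ)]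
    push_cast
    ring
  -- step 1: rewrite the integrand
  have h1 : (∫ s1 in (0:ℝ)..s,
        Complex.exp (-(Complex.I) * (s - s1) * (k : ℝ) ^ 2) *
          pc (dx (eS s1 w)) (dx (eS s1 w)) k)
      = ∫ s1 in (0:ℝ)..s, ∑' j : ℤ,
          c j * Complex.exp (2 * Complex.I * ((j * (k - j) : ℤ):ℂ) * (s1:ℂ)) := by
    refine intervalIntegral.integral_congr fun s1 _ => ?_
    rw [pc, ← tsum_mul_left]
    refine tsum_congr fun j => ?_
    simp only [dx, eS]
    exact term_eq s s1 j k (w j) (w (k - j))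
  rw [h1]
  -- step 2: swap integral and sum
  set V : ℝ := (MeasureTheory.volume (Set.uIoc (0:ℝ) s)).toReal with hV
  have hnint : ∀ j : ℤ, (∫ a in Set.uIoc (0:ℝ) s,
      ‖c j * Complex.exp (2 * Complex.I * ((j * (k - j) : ℤ):ℂ) * (a:ℂ))‖) = V * ‖c j‖ := by
    intro j
    simp_rw [norm_mul, normExp2 ((j * (k - j) : ℤ):ℂ) (by simp) _, mul_one]
    rw [MeasureTheory.setIntegral_const]
    simp [hV, smul_eq_mul, MeasureTheory.measureReal_def]
  have hswap : (∫ s1 in (0:ℝ)..s, ∑' j : ℤ,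
        c j * Complex.exp (2 * Complex.I * ((j * (k - j) : ℤ):ℂ) * (s1:ℂ)))
      = ∑' j : ℤ, ∫ s1 in (0:ℝ)..s,
          c j * Complex.exp (2 * Complex.I * ((j * (k - j) : ℤ):ℂ) * (s1:ℂ)) := by
    simp_rw [intervalIntegral.intervalIntegral_eq_integral_uIoc]
    rw [tsum_const_smul'', ← MeasureTheory.integral_tsum_of_summable_integral_norm]
    · intro j
      apply Continuous.integrableOn_uIoc
      fun_prop
    · refine Summable.congr ((hSq1.mul_left V)) (fun j => ?_)
      rw [hnint j, hnormc j]
  rw [hswap]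
  -- step 3: LHS as a single tsum
  have hsum1 : Summable (fun j : ℤ => eS s w j * eS s w (k - j)) := by
    refine Summable.of_norm_bounded hSq0 (fun j => le_of_eq ?_)
    simp [eS, norm_mul, Complex.norm_exp, pow_two, Complex.mul_re, Complex.mul_im,
      Complex.sub_re, Complex.sub_im]
  have hsum2 : Summable (fun j : ℤ =>
      Complex.exp (-(Complex.I) * (s:ℂ) * ((k:ℝ):ℂ)^2) * (w j * w (k - j))) := by
    refine Summable.of_norm_bounded hSq0 (fun j => le_of_eq ?_)
    simp [norm_mul, Complex.norm_exp, pow_two, Complex.mul_re, Complex.mul_im, mul_assoc]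
  have hL : pc (eS s w) (eS s w) k -
        Complex.exp (-(Complex.I) * s * (k : ℝ) ^ 2) * pc w w k
      = ∑' j : ℤ, (eS s w j * eS s w (k - j) -
          Complex.exp (-(Complex.I) * (s:ℂ) * ((k:ℝ):ℂ)^2) * (w j * w (k - j))) := by
    rw [pc, pc, ← tsum_mul_left, ← Summable.tsum_sub hsum1 hsum2]
  rw [hL, ← tsum_mul_left]
  -- step 4: term by term
  refine tsum_congr fun j => ?_
  rw [intervalIntegral.integral_const_mul]
  by_cases hm : j * (k - j) = 0
  · have hj : (j:ℂ) = 0 ∨ ((k - j : ℤ):ℂ) = 0 := by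
      rcases mul_eq_zero.1 hm with h | h
      · left; exact_mod_cast congrArg (Int.cast : ℤ → ℂ) h
      · right; exact_mod_cast congrArg (Int.cast : ℤ → ℂ) h
    have hmc : (j:ℂ) * ((k - j : ℤ):ℂ) = 0 := by exact_mod_cast congrArg (Int.cast : ℤ → ℂ) hm
    have hc0 : c j = 0 := by
      rcases hj with h | h <;> rw [hc] <;> simp only [h, mul_zero, zero_mul]
    have hE : Complex.exp (-(Complex.I) * (s:ℂ) * ((j:ℝ):ℂ)^2) *
        Complex.exp (-(Complex.I) * (s:ℂ) * (((k - j : ℤ):ℝ):ℂ)^2)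
        = Complex.exp (-(Complex.I) * (s:ℂ) * ((k:ℝ):ℂ)^2) := by
      rw [← Complex.exp_add]
      congr 1
      push_cast at hmc ⊢
      linear_combination 2 * Complex.I * (s:ℂ) * hmc
    simp only [eS, hc0, mul_zero, zero_mul]
    push_cast at hE ⊢
    linear_combination (w j * w (k - j)) * hE
  · have hm' : 2 * Complex.I * ((j * (k - j) : ℤ):ℂ) ≠ 0 := by
      have h2 : ((j * (k - j) : ℤ):ℂ) ≠ 0 := Int.cast_ne_zero.mpr hm
      exact mul_ne_zero (mul_ne_zero two_ne_zero Complex.I_ne_zero) h2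
    rw [integral_exp_mul_complex hm']
    simp only [eS, hc, Complex.ofReal_zero, mul_zero, Complex.exp_zero]
    have hsplit : Complex.exp (-(Complex.I) * (s:ℂ) * ((j:ℝ):ℂ)^2) *
        Complex.exp (-(Complex.I) * (s:ℂ) * (((k - j : ℤ):ℝ):ℂ)^2)
        = Complex.exp (-(Complex.I) * (s:ℂ) * ((k:ℝ):ℂ)^2) *
          Complex.exp (2 * Complex.I * ((j * (k - j) : ℤ):ℂ) * (s:ℂ)) := by
      rw [← Complex.exp_add, ← Complex.exp_add]
      congr 1
      push_cast
      ring
    have hj : j ≠ 0 := fun h => hm (by simp [h])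
    have hkj : k - j ≠ 0 := fun h => hm (by simp [h])
    have hj0 : (j:ℂ) ≠ 0 := Int.cast_ne_zero.mpr hj
    have hkj0 : (k:ℂ) - (j:ℂ) ≠ 0 := by
      have h2 := Int.cast_ne_zero (α := ℂ) |>.mpr hkj
      push_cast at h2
      exact h2
    have hm'' : (2 * Complex.I * ((j:ℂ) * ((k:ℂ) - (j:ℂ)))) ≠ 0 :=
      mul_ne_zero (mul_ne_zero two_ne_zero Complex.I_ne_zero) (mul_ne_zero hj0 hkj0)
    push_cast at hsplit ⊢
    linear_combination (w j * w (k - j)) * hsplit +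
      (w j * w (k - j) * Complex.exp (-Complex.I * (s:ℂ) * (k:ℂ)^2) *
        (Complex.exp (2 * Complex.I * ((j:ℂ) * ((k:ℂ) - (j:ℂ))) * (s:ℂ)) - 1) * Complex.I ^ 2) *
        (mul_inv_cancel₀ hm'') +
      (w j * w (k - j) * Complex.exp (-Complex.I * (s:ℂ) * (k:ℂ)^2) *
        (Complex.exp (2 * Complex.I * ((j:ℂ) * ((k:ℂ) - (j:ℂ))) * (s:ℂ)) - 1)) * Complex.I_sq
end

section
/- Commutator identity for the modulus squared under the Schrödinger flow: for a sufficiently regular function $w$ on $\mathbb{T}$ and $s \in \mathbb{R}$, $|e^{is\partial_x^2}w|^2 - e^{is\partial_x^2}(|w|^2) = -2i\int_0^s e^{i(s-s_1)\partial_x^2}\big[(e^{-is_1\partial_x^2}\partial_x^2\overline{w})(e^{is_1\partial_x^2}w) + |e^{is_1\partial_x^2}\partial_x w|^2\big]\, ds_1$. -/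
lemma jap_nonneg (x : ℝ) : 0 ≤ jap x := Real.sqrt_nonneg _
lemma one_le_jap (x : ℝ) : 1 ≤ jap x := by
  rw [jap]
  exact Real.one_le_sqrt.mpr (by nlinarith [sq_nonneg x])
lemma abs_le_jap (x : ℝ) : |x| ≤ jap x := by
  rw [jap, ← Real.sqrt_sq_eq_abs]
  exact Real.sqrt_le_sqrt (by nlinarith)
lemma regular_pow {w : ℤ → ℂ} (hw : Regular w) (n : ℕ) :
    Summable (fun m : ℤ => jap m ^ n * ‖w m‖) := by
  simpa [Real.rpow_natCast] using hw n
lemma norm_exp_aux (r : ℝ) (z : ℂ) (h : z = (r:ℂ) * Complex.I) : ‖Complex.exp z‖ = 1 := by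
  subst h; rw [Complex.norm_exp_ofReal_mul_I]

theorem term_int (s β : ℝ) (E : ℂ) :
    (-2*Complex.I) * ∫ s1 in (0:ℝ)..s,
        Complex.I/2 * (Complex.I * β) * E * Complex.exp (Complex.I * β * s1)
      = (Complex.exp (Complex.I * β * s) - 1) * E := by
  rcases eq_or_ne β 0 with h | h
  · simp [h]
  · have hc : Complex.I * (β:ℂ) ≠ 0 := by
      simp [Complex.ext_iff, h]
    have hβ : (β:ℂ) ≠ 0 := Complex.ofReal_ne_zero.mpr h
    rw [intervalIntegral.integral_const_mul, integral_exp_mul_complex hc]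
    push_cast
    field_simp
    ring_nf
    rw [Complex.I_sq]
    ring_nf
    rw [Complex.exp_zero]
    ring

theorem lhs_term (s : ℝ) (k j : ℤ) (A B : ℂ) :
    (Complex.exp (-(Complex.I)*s*((j:ℤ):ℝ)^2) * A) *
        (starRingEnd ℂ) (Complex.exp (-(Complex.I)*s*((j-k:ℤ):ℝ)^2) * B)
      - Complex.exp (-(Complex.I)*s*((k:ℤ):ℝ)^2) * (A * (starRingEnd ℂ) B)
    = (Complex.exp (Complex.I * ((2*(k:ℝ)*((k:ℝ)-(j:ℝ)) : ℝ) : ℂ) * s) - 1) *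
        (Complex.exp (-(Complex.I)*s*((k:ℤ):ℝ)^2) * (A * (starRingEnd ℂ) B)) := by
  have h1 : (starRingEnd ℂ) (Complex.exp (-(Complex.I)*s*((j-k:ℤ):ℝ)^2))
      = Complex.exp (Complex.I*s*((j:ℝ)-(k:ℝ))^2) := by
    rw [← Complex.exp_conj]
    congr 1
    simp [Complex.ext_iff]
  have h2 : Complex.exp (-(Complex.I)*s*((j:ℤ):ℝ)^2) * Complex.exp (Complex.I*s*((j:ℝ)-(k:ℝ))^2)
      = Complex.exp (Complex.I * ((2*(k:ℝ)*((k:ℝ)-(j:ℝ)) : ℝ) : ℂ) * s) *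
        Complex.exp (-(Complex.I)*s*((k:ℤ):ℝ)^2) := by
    rw [← Complex.exp_add, ← Complex.exp_add]
    congr 1
    push_cast
    ring
  rw [map_mul, h1]
  linear_combination A * (starRingEnd ℂ) B * h2

theorem rhs_term (s s1 : ℝ) (k j : ℤ) (A B : ℂ) :
    Complex.exp (-(Complex.I)*(s-s1)*((k:ℤ):ℝ)^2) *
      ((Complex.exp (-(Complex.I)*(-s1)*((k-j:ℤ):ℝ)^2) *
          ((Complex.I*((k-j:ℤ):ℂ))^2 * (starRingEnd ℂ) B)) *
          (Complex.exp (-(Complex.I)*s1*((j:ℤ):ℝ)^2) * A)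
        + (Complex.I*((j:ℤ):ℂ) * (Complex.exp (-(Complex.I)*s1*((j:ℤ):ℝ)^2) * A)) *
          (starRingEnd ℂ) (Complex.I*((j-k:ℤ):ℂ) *
            (Complex.exp (-(Complex.I)*s1*((j-k:ℤ):ℝ)^2) * B)))
    = Complex.I/2 * (Complex.I * ((2*(k:ℝ)*((k:ℝ)-(j:ℝ)) : ℝ) : ℂ)) *
        (Complex.exp (-(Complex.I)*s*((k:ℤ):ℝ)^2) * (A * (starRingEnd ℂ) B)) *
        Complex.exp (Complex.I * ((2*(k:ℝ)*((k:ℝ)-(j:ℝ)) : ℝ) : ℂ) * s1) := by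
  have h1 : (starRingEnd ℂ) (Complex.exp (-(Complex.I)*s1*((j-k:ℤ):ℝ)^2))
      = Complex.exp (Complex.I*s1*((j:ℝ)-(k:ℝ))^2) := by
    rw [← Complex.exp_conj]; congr 1; simp [Complex.ext_iff]
  have h2 : Complex.exp (-(Complex.I)*(s-s1)*((k:ℤ):ℝ)^2) *
      (Complex.exp (-(Complex.I)*(-s1)*((k-j:ℤ):ℝ)^2) * Complex.exp (-(Complex.I)*s1*((j:ℤ):ℝ)^2))
      = Complex.exp (-(Complex.I)*s*((k:ℤ):ℝ)^2) *
        Complex.exp (Complex.I * ((2*(k:ℝ)*((k:ℝ)-(j:ℝ)) : ℝ) : ℂ) * s1) := by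
    rw [← Complex.exp_add, ← Complex.exp_add, ← Complex.exp_add]
    congr 1; push_cast; ring
  have h3 : Complex.exp (-(Complex.I)*(s-s1)*((k:ℤ):ℝ)^2) *
      (Complex.exp (-(Complex.I)*s1*((j:ℤ):ℝ)^2) * Complex.exp (Complex.I*s1*((j:ℝ)-(k:ℝ))^2))
      = Complex.exp (-(Complex.I)*s*((k:ℤ):ℝ)^2) *
        Complex.exp (Complex.I * ((2*(k:ℝ)*((k:ℝ)-(j:ℝ)) : ℝ) : ℂ) * s1) := by
    rw [← Complex.exp_add, ← Complex.exp_add, ← Complex.exp_add]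
    congr 1; push_cast; ring
  simp only [map_mul, h1, Complex.conj_I, map_intCast]
  push_cast at h2 h3 ⊢
  ring_nf at h2 h3 ⊢
  linear_combination ((Complex.I*((k:ℂ)-j))^2 * ((starRingEnd ℂ) B) * A) * h2
    + ((Complex.I*(j:ℂ)) * (-Complex.I*((j:ℂ)-k)) * A * ((starRingEnd ℂ) B)) * h3


/-- **Commutator identity for the modulus squared under the Schrödinger flow:** for
sufficiently regular `w` on `𝕋` and `s ∈ ℝ`, mode by mode,
`|e^{is∂ₓ²}w|² - e^{is∂ₓ²}(|w|²)
  = -2i ∫₀^s e^{i(s-s₁)∂ₓ²}[(e^{-is₁∂ₓ²}∂ₓ²w̄)(e^{is₁∂ₓ²}w) + |e^{is₁∂ₓ²}∂ₓw|²] ds₁`. -/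
theorem modulus_square_commutator_identity (w : ℤ → ℂ) (hw : Regular w) (s : ℝ) :
    ∀ k : ℤ,
      pc (eS s w) (cconj (eS s w)) k -
          Complex.exp (-(Complex.I) * s * (k : ℝ) ^ 2) * pc w (cconj w) k =
        (-2 * Complex.I) *
          ∫ s1 in (0 : ℝ)..s,
            Complex.exp (-(Complex.I) * (s - s1) * (k : ℝ) ^ 2) *
              (pc (eS (-s1) (dx2 (cconj w))) (eS s1 w) k +
                pc (dx (eS s1 w)) (cconj (dx (eS s1 w))) k) := by
  intro k
  classical
  have hS0 : Summable (fun m : ℤ => ‖w m‖) := by simpa using regular_pow hw 0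
  have hS2 : Summable (fun m : ℤ => jap m ^ 2 * ‖w m‖) := regular_pow hw 2
  set M : ℝ := ∑' m : ℤ, ‖w m‖ with hM
  have hM0 : 0 ≤ M := tsum_nonneg fun _ => norm_nonneg _
  have hwM : ∀ m : ℤ, ‖w m‖ ≤ M := fun m => Summable.le_tsum hS0 m fun _ _ => norm_nonneg _
  set D : ℤ → ℝ := fun j => ((|(k:ℝ)|+1)^2 * (jap (j:ℝ)^2 * ‖w j‖)) * (2*M) with hD
  have hDsum : Summable D := (hS2.mul_left _).mul_right _
  have hB2 : ∀ j : ℤ, 0 ≤ (|(k:ℝ)|+1)^2 * jap (j:ℝ)^2 := by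
    intro j; positivity
  have hkj : ∀ j : ℤ, |(k:ℝ) - (j:ℝ)| ≤ (|(k:ℝ)|+1) * jap (j:ℝ) := by
    intro j
    have h1 := abs_le_jap (j:ℝ)
    have h2 := one_le_jap (j:ℝ)
    have h3 := abs_nonneg (k:ℝ)
    calc |(k:ℝ) - (j:ℝ)| ≤ |(k:ℝ)| + |(j:ℝ)| := abs_sub _ _
      _ ≤ (|(k:ℝ)|+1) * jap (j:ℝ) := by nlinarith
  have hkj2 : ∀ j : ℤ, ((k:ℝ) - (j:ℝ))^2 ≤ (|(k:ℝ)|+1)^2 * jap (j:ℝ)^2 := by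
    intro j
    calc ((k:ℝ) - (j:ℝ))^2 = |(k:ℝ) - (j:ℝ)|^2 := (sq_abs _).symm
      _ ≤ ((|(k:ℝ)|+1) * jap (j:ℝ))^2 := pow_le_pow_left₀ (abs_nonneg _) (hkj j) 2
      _ = (|(k:ℝ)|+1)^2 * jap (j:ℝ)^2 := by ring
  have master : ∀ (j : ℤ) (r : ℝ), 0 ≤ r → r ≤ 2*((|(k:ℝ)|+1)^2 * jap (j:ℝ)^2) →
      r * (‖w j‖ * ‖w (j-k)‖) ≤ D j := by
    intro j r h0 hr
    have h1 := hwM (j-k)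
    have h2 : (0:ℝ) ≤ ‖w j‖ := norm_nonneg _
    have h3 : (0:ℝ) ≤ ‖w (j-k)‖ := norm_nonneg _
    simp only [hD]
    nlinarith [mul_nonneg (mul_nonneg h0 h2) (sub_nonneg.2 h1),
      mul_nonneg (mul_nonneg (sub_nonneg.2 hr) h2) hM0]
  -- explicit tsum expansions
  have hP1 : ∀ t : ℝ, pc (eS (-t) (dx2 (cconj w))) (eS t w) k
      = ∑' j : ℤ, (Complex.exp (-(Complex.I)*(-t)*((k-j:ℤ):ℝ)^2) *
          ((Complex.I*((k-j:ℤ):ℂ))^2 * (starRingEnd ℂ) (w (j-k)))) *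
          (Complex.exp (-(Complex.I)*t*((j:ℤ):ℝ)^2) * w j) := by
    intro t
    show (∑' i : ℤ, eS (-t) (dx2 (cconj w)) i * eS t w (k - i)) = _
    rw [← Equiv.tsum_eq (Equiv.subLeft k) (fun i => eS (-t) (dx2 (cconj w)) i * eS t w (k - i))]
    refine tsum_congr fun j => ?_
    simp only [Equiv.subLeft_apply, eS, dx2, cconj, sub_sub_cancel, neg_sub, Complex.ofReal_neg]
  have hP2 : ∀ t : ℝ, pc (dx (eS t w)) (cconj (dx (eS t w))) k
      = ∑' j : ℤ, (Complex.I*((j:ℤ):ℂ) * (Complex.exp (-(Complex.I)*t*((j:ℤ):ℝ)^2) * w j)) *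
          (starRingEnd ℂ) (Complex.I*((j-k:ℤ):ℂ) *
            (Complex.exp (-(Complex.I)*t*((j-k:ℤ):ℝ)^2) * w (j-k))) := by
    intro t
    refine tsum_congr fun j => ?_
    simp only [eS, dx, cconj, neg_sub]
  have hL : pc (eS s w) (cconj (eS s w)) k
      = ∑' j : ℤ, (Complex.exp (-(Complex.I)*s*((j:ℤ):ℝ)^2) * w j) *
          (starRingEnd ℂ) (Complex.exp (-(Complex.I)*s*((j-k:ℤ):ℝ)^2) * w (j-k)) := by
    refine tsum_congr fun j => ?_
    simp only [eS, cconj, neg_sub]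
  have hW : pc w (cconj w) k = ∑' j : ℤ, w j * (starRingEnd ℂ) (w (j-k)) := by
    refine tsum_congr fun j => ?_
    simp only [cconj, neg_sub]
  -- summability of the two integrand expansions
  have hsum1 : ∀ t : ℝ, Summable (fun j : ℤ =>
      (Complex.exp (-(Complex.I)*(-t)*((k-j:ℤ):ℝ)^2) *
          ((Complex.I*((k-j:ℤ):ℂ))^2 * (starRingEnd ℂ) (w (j-k)))) *
          (Complex.exp (-(Complex.I)*t*((j:ℤ):ℝ)^2) * w j)) := by
    intro t
    refine Summable.of_norm_bounded hDsum fun j => ?_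
    have e1 : ‖Complex.exp (-(Complex.I)*(-t)*((k-j:ℤ):ℝ)^2)‖ = 1 :=
      norm_exp_aux (t*((k-j:ℤ):ℝ)^2) _ (by push_cast; ring)
    have e2 : ‖Complex.exp (-(Complex.I)*t*((j:ℤ):ℝ)^2)‖ = 1 :=
      norm_exp_aux (-(t*((j:ℤ):ℝ)^2)) _ (by push_cast; ring)
    have hn : ‖(Complex.exp (-(Complex.I)*(-t)*((k-j:ℤ):ℝ)^2) *
          ((Complex.I*((k-j:ℤ):ℂ))^2 * (starRingEnd ℂ) (w (j-k)))) *
          (Complex.exp (-(Complex.I)*t*((j:ℤ):ℝ)^2) * w j)‖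
        = (((k:ℝ)-(j:ℝ))^2) * (‖w j‖ * ‖w (j-k)‖) := by
      simp only [norm_mul, norm_pow, e1, e2, one_mul, RCLike.norm_conj]
      rw [Complex.norm_I]
      rw [show ‖((k-j:ℤ):ℂ)‖ = |(k:ℝ) - (j:ℝ)| by
        rw [show ((k-j:ℤ):ℂ) = (((k:ℝ) - (j:ℝ) : ℝ) : ℂ) by push_cast; ring,
          Complex.norm_real, Real.norm_eq_abs]]
      rw [one_mul, sq_abs]
      ring
    rw [hn]
    refine master j _ (sq_nonneg _) ?_
    have := hkj2 j
    have := hB2 j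
    linarith
  have hsum2 : ∀ t : ℝ, Summable (fun j : ℤ =>
      (Complex.I*((j:ℤ):ℂ) * (Complex.exp (-(Complex.I)*t*((j:ℤ):ℝ)^2) * w j)) *
          (starRingEnd ℂ) (Complex.I*((j-k:ℤ):ℂ) *
            (Complex.exp (-(Complex.I)*t*((j-k:ℤ):ℝ)^2) * w (j-k)))) := by
    intro t
    refine Summable.of_norm_bounded hDsum fun j => ?_
    have e2 : ‖Complex.exp (-(Complex.I)*t*((j:ℤ):ℝ)^2)‖ = 1 :=
      norm_exp_aux (-(t*((j:ℤ):ℝ)^2)) _ (by push_cast; ring)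
    have e3 : ‖Complex.exp (-(Complex.I)*t*((j-k:ℤ):ℝ)^2)‖ = 1 :=
      norm_exp_aux (-(t*((j-k:ℤ):ℝ)^2)) _ (by push_cast; ring)
    have hn : ‖(Complex.I*((j:ℤ):ℂ) * (Complex.exp (-(Complex.I)*t*((j:ℤ):ℝ)^2) * w j)) *
          (starRingEnd ℂ) (Complex.I*((j-k:ℤ):ℂ) *
            (Complex.exp (-(Complex.I)*t*((j-k:ℤ):ℝ)^2) * w (j-k)))‖
        = (|(j:ℝ)| * |(j:ℝ)-(k:ℝ)|) * (‖w j‖ * ‖w (j-k)‖) := by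
      simp only [norm_mul, e2, e3, one_mul, mul_one, RCLike.norm_conj]
      rw [Complex.norm_I]
      rw [show ‖((j:ℤ):ℂ)‖ = |(j:ℝ)| by
        rw [show ((j:ℤ):ℂ) = (((j:ℝ) : ℝ) : ℂ) by push_cast; ring,
          Complex.norm_real, Real.norm_eq_abs]]
      rw [show ‖((j-k:ℤ):ℂ)‖ = |(j:ℝ)-(k:ℝ)| by
        rw [show ((j-k:ℤ):ℂ) = (((j:ℝ) - (k:ℝ) : ℝ) : ℂ) by push_cast; ring,
          Complex.norm_real, Real.norm_eq_abs]]
      ring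
    rw [hn]
    refine master j _ (mul_nonneg (abs_nonneg _) (abs_nonneg _)) ?_
    have h4 : |(j:ℝ)| * |(j:ℝ)-(k:ℝ)| ≤ jap (j:ℝ) * ((|(k:ℝ)|+1) * jap (j:ℝ)) :=
      mul_le_mul (abs_le_jap _) (by rw [abs_sub_comm]; exact hkj j) (abs_nonneg _) (jap_nonneg _)
    have h5 : (0:ℝ) ≤ (|(k:ℝ)|+1)^2 - (|(k:ℝ)|+1) := by nlinarith [abs_nonneg (k:ℝ)]
    nlinarith [mul_nonneg h5 (sq_nonneg (jap (j:ℝ))), hB2 j]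
  -- the common integrand as a single tsum
  set F : ℤ → ℝ → ℂ := fun j t =>
    Complex.I/2 * (Complex.I * ((2*(k:ℝ)*((k:ℝ)-(j:ℝ)) : ℝ) : ℂ)) *
      (Complex.exp (-(Complex.I)*s*((k:ℤ):ℝ)^2) * (w j * (starRingEnd ℂ) (w (j-k)))) *
      Complex.exp (Complex.I * ((2*(k:ℝ)*((k:ℝ)-(j:ℝ)) : ℝ) : ℂ) * t) with hF
  have hFnorm : ∀ (j : ℤ) (t : ℝ), ‖F j t‖ ≤ D j := by
    intro j t
    have e1 : ‖Complex.exp (-(Complex.I)*s*((k:ℤ):ℝ)^2)‖ = 1 :=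
      norm_exp_aux (-(s*((k:ℤ):ℝ)^2)) _ (by push_cast; ring)
    have e2 : ‖Complex.exp (Complex.I * ((2*(k:ℝ)*((k:ℝ)-(j:ℝ)) : ℝ) : ℂ) * t)‖ = 1 :=
      norm_exp_aux (2*(k:ℝ)*((k:ℝ)-(j:ℝ))*t) _ (by push_cast; ring)
    have nI : ‖Complex.I/2‖ = 1/2 := by
      rw [norm_div, Complex.norm_I]
      norm_num
    have nb : ‖(Complex.I * ((2*(k:ℝ)*((k:ℝ)-(j:ℝ)) : ℝ) : ℂ))‖ = |2*(k:ℝ)*((k:ℝ)-(j:ℝ))| := by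
      rw [norm_mul, Complex.norm_I, Complex.norm_real,
        Real.norm_eq_abs, one_mul]
    have hn : ‖F j t‖ = (1/2 * |2*(k:ℝ)*((k:ℝ)-(j:ℝ))|) * (‖w j‖ * ‖w (j-k)‖) := by
      simp only [hF, norm_mul, e1, e2, one_mul, mul_one, RCLike.norm_conj]
      rw [Complex.norm_I, Complex.norm_real, Real.norm_eq_abs, nI]
      ring
    rw [hn]
    refine master j _ (by positivity) ?_
    have h4 : |2*(k:ℝ)*((k:ℝ)-(j:ℝ))| = 2 * |(k:ℝ)| * |(k:ℝ)-(j:ℝ)| := by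
      rw [abs_mul, abs_mul, abs_two]
    rw [h4]
    have h6 := mul_le_mul_of_nonneg_left (hkj j) (abs_nonneg (k:ℝ))
    have h7 := one_le_jap (j:ℝ)
    have h8 := jap_nonneg (j:ℝ)
    have h9 := abs_nonneg (k:ℝ)
    nlinarith [mul_nonneg (mul_nonneg h9 h8) h8, sq_nonneg (jap (j:ℝ)),
      mul_nonneg h9 h8, mul_nonneg (mul_nonneg h9 h9) h8,
      mul_le_mul_of_nonneg_left h6 h9]
  have hSumF : ∀ t : ℝ, Summable (fun j : ℤ => F j t) :=
    fun t => Summable.of_norm_bounded hDsum (fun j => hFnorm j t)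
  have hInteg : ∀ t : ℝ,
      Complex.exp (-(Complex.I) * (s - t) * ((k:ℤ):ℝ)^2) *
        (pc (eS (-t) (dx2 (cconj w))) (eS t w) k + pc (dx (eS t w)) (cconj (dx (eS t w))) k)
      = ∑' j : ℤ, F j t := by
    intro t
    rw [hP1 t, hP2 t, ← Summable.tsum_add (hsum1 t) (hsum2 t), ← tsum_mul_left]
    refine tsum_congr fun j => ?_
    simp only [hF]
    exact rhs_term s t k j (w j) (w (j-k))
  have hHS : HasSum (fun j : ℤ => ∫ t in (0:ℝ)..s, F j t)
      (∫ t in (0:ℝ)..s, Complex.exp (-(Complex.I) * (s - t) * ((k:ℤ):ℝ)^2) *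
        (pc (eS (-t) (dx2 (cconj w))) (eS t w) k + pc (dx (eS t w)) (cconj (dx (eS t w))) k)) := by
    refine intervalIntegral.hasSum_integral_of_dominated_convergence
      (bound := fun j _ => D j) ?_ ?_ ?_ ?_ ?_
    · intro j
      apply Continuous.aestronglyMeasurable
      simp only [hF]
      fun_prop
    · intro j
      filter_upwards with t _
      exact hFnorm j t
    · filter_upwards with t _
      exact hDsum
    · exact intervalIntegrable_const
    · filter_upwards with t _
      rw [hInteg t]
      exact (hSumF t).hasSum
  -- summability for the left-hand side
  have hsumL : Summable (fun j : ℤ =>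
      (Complex.exp (-(Complex.I)*s*((j:ℤ):ℝ)^2) * w j) *
          (starRingEnd ℂ) (Complex.exp (-(Complex.I)*s*((j-k:ℤ):ℝ)^2) * w (j-k))) := by
    refine Summable.of_norm_bounded (hS0.mul_left M) fun j => ?_
    have e1 : ‖Complex.exp (-(Complex.I)*s*((j:ℤ):ℝ)^2)‖ = 1 :=
      norm_exp_aux (-(s*((j:ℤ):ℝ)^2)) _ (by push_cast; ring)
    have e2 : ‖Complex.exp (-(Complex.I)*s*((j-k:ℤ):ℝ)^2)‖ = 1 :=
      norm_exp_aux (-(s*((j-k:ℤ):ℝ)^2)) _ (by push_cast; ring)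
    have hn : ‖(Complex.exp (-(Complex.I)*s*((j:ℤ):ℝ)^2) * w j) *
          (starRingEnd ℂ) (Complex.exp (-(Complex.I)*s*((j-k:ℤ):ℝ)^2) * w (j-k))‖
        = ‖w j‖ * ‖w (j-k)‖ := by
      simp only [norm_mul, e1, e2, one_mul, RCLike.norm_conj]
    rw [hn]
    show _ ≤ M * ‖w j‖
    nlinarith [mul_le_mul_of_nonneg_left (hwM (j-k)) (norm_nonneg (w j))]
  have hsumR : Summable (fun j : ℤ =>
      Complex.exp (-(Complex.I)*s*((k:ℤ):ℝ)^2) * (w j * (starRingEnd ℂ) (w (j-k)))) := by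
    refine Summable.of_norm_bounded (hS0.mul_left M) fun j => ?_
    have e1 : ‖Complex.exp (-(Complex.I)*s*((k:ℤ):ℝ)^2)‖ = 1 :=
      norm_exp_aux (-(s*((k:ℤ):ℝ)^2)) _ (by push_cast; ring)
    have hn : ‖Complex.exp (-(Complex.I)*s*((k:ℤ):ℝ)^2) * (w j * (starRingEnd ℂ) (w (j-k)))‖
        = ‖w j‖ * ‖w (j-k)‖ := by
      simp only [norm_mul, e1, one_mul, RCLike.norm_conj]
    rw [hn]
    show _ ≤ M * ‖w j‖
    nlinarith [mul_le_mul_of_nonneg_left (hwM (j-k)) (norm_nonneg (w j))]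
  calc pc (eS s w) (cconj (eS s w)) k -
        Complex.exp (-(Complex.I) * s * (k : ℝ) ^ 2) * pc w (cconj w) k
      = ∑' j : ℤ, ((Complex.exp (-(Complex.I)*s*((j:ℤ):ℝ)^2) * w j) *
            (starRingEnd ℂ) (Complex.exp (-(Complex.I)*s*((j-k:ℤ):ℝ)^2) * w (j-k))
          - Complex.exp (-(Complex.I)*s*((k:ℤ):ℝ)^2) * (w j * (starRingEnd ℂ) (w (j-k)))) := by
        rw [hL, hW, ← tsum_mul_left, ← Summable.tsum_sub hsumL hsumR]
    _ = ∑' j : ℤ, (-2*Complex.I) * ∫ t in (0:ℝ)..s, F j t := by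
        refine tsum_congr fun j => ?_
        rw [lhs_term s k j (w j) (w (j-k)),
          ← term_int s (2*(k:ℝ)*((k:ℝ)-(j:ℝ)))
            (Complex.exp (-(Complex.I)*s*((k:ℤ):ℝ)^2) * (w j * (starRingEnd ℂ) (w (j-k))))]
    _ = (-2*Complex.I) * ∑' j : ℤ, ∫ t in (0:ℝ)..s, F j t := tsum_mul_left
    _ = _ := by rw [hHS.tsum_eq]
end
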